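/- Let n ≥ 2 be an integer with k = ω(n). If N_k/φ(N_k) ≤ e^γ · log(log N_k), then σ(n)/n < e^γ · log(log n). -/

import Mathlib

open Real Finset

/-- `Nk k` is the `k`-th primorial: the product of the first `k` primes
(`Nat.nth Nat.Prime i` is the `(i+1)`-st prime, so `Nat.nth Nat.Prime 0 = 2`). -/
noncomputable def Nk (k : ℕ) : ℕ := ∏ i ∈ Finset.range k, Nat.nth Nat.Prime i

/-- `M k = exp (e^(-γ) * N_k / φ(N_k)) - log N_k`. -/
noncomputable def M (k : ℕ) : ℝ :=
  Real.exp (Real.exp (-Real.eulerMascheroniConstant) * (Nk k : ℝ) / (Nat.totient (Nk k) : ℝ))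
    - Real.log (Nk k)

/- geometric sum identity in ℕ -/
lemma aux_geom (p m : ℕ) (hp : 1 ≤ p) :
    (∑ i ∈ Finset.range m, p ^ i) * (p - 1) + 1 = p ^ m := by
  induction m with
  | zero => simp
  | succ m ih =>
    rw [Finset.sum_range_succ, add_mul, pow_succ]
    have h1 : p ^ m * (p - 1) = p ^ m * p - p ^ m := by
      rw [Nat.mul_sub, mul_one]
    have h2 : p ^ m ≤ p ^ m * p := Nat.le_mul_of_pos_right _ hp
    omega

/- per-prime strict inequality -/
lemma aux_prime_pow (p a : ℕ) (hp : p.Prime) (ha : 1 ≤ a) :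
    (∑ j ∈ Finset.range (a + 1), p ^ j) * (p ^ (a - 1) * (p - 1)) < p ^ (2 * a) := by
  have hp1 : 1 ≤ p := hp.one_lt.le
  have hg := aux_geom p (a + 1) hp1
  have key : (∑ j ∈ Finset.range (a + 1), p ^ j) * (p - 1) < p ^ (a + 1) := by omega
  calc (∑ j ∈ Finset.range (a + 1), p ^ j) * (p ^ (a - 1) * (p - 1))
      = ((∑ j ∈ Finset.range (a + 1), p ^ j) * (p - 1)) * p ^ (a - 1) := by ring
    _ < p ^ (a + 1) * p ^ (a - 1) :=
        (Nat.mul_lt_mul_right (pow_pos hp.pos _)).mpr key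
    _ = p ^ (2 * a) := by rw [← pow_add]; congr 1; omega

/- σ(n) * φ(n) < n^2 for n ≥ 2 -/
lemma aux_sigma_phi_lt (n : ℕ) (hn : 2 ≤ n) :
    (ArithmeticFunction.sigma 1 n) * Nat.totient n < n * n := by
  have hn0 : n ≠ 0 := by omega
  have hσ : (ArithmeticFunction.sigma 1 n : ℕ) =
      ∏ p ∈ n.primeFactors, ∑ j ∈ Finset.range (n.factorization p + 1), p ^ j := by
    rw [ArithmeticFunction.sigma_one_apply, Nat.sum_divisors hn0]
  have hφ : Nat.totient n =
      ∏ p ∈ n.primeFactors, p ^ (n.factorization p - 1) * (p - 1) := by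
    rw [Nat.totient_eq_prod_factorization hn0, Nat.prod_factorization_eq_prod_primeFactors]
  have hnn : n * n = ∏ p ∈ n.primeFactors, p ^ (2 * n.factorization p) := by
    conv_lhs => rw [← Nat.factorization_prod_pow_eq_self hn0]
    rw [Nat.prod_factorization_eq_prod_primeFactors, ← Finset.prod_mul_distrib]
    exact Finset.prod_congr rfl fun p hp => by rw [← pow_add, two_mul]
  rw [hσ, hφ, hnn, ← Finset.prod_mul_distrib]
  refine Finset.prod_lt_prod_of_nonempty ?_ ?_ ?_
  · intro p hp
    have hp' := Nat.prime_of_mem_primeFactors hp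
    have := Nat.Prime.factorization_pos_of_dvd hp' hn0 (Nat.dvd_of_mem_primeFactors hp)
    have h1 : 0 < p - 1 := by have := hp'.two_le; omega
    have h2 : 0 < ∑ j ∈ Finset.range (n.factorization p + 1), p ^ j :=
      Finset.sum_pos (fun j _ => pow_pos hp'.pos j) (by simp)
    exact Nat.mul_pos h2 (Nat.mul_pos (pow_pos hp'.pos _) h1)
  · intro p hp
    exact aux_prime_pow p _ (Nat.prime_of_mem_primeFactors hp)
      (Nat.Prime.factorization_pos_of_dvd (Nat.prime_of_mem_primeFactors hp) hn0
        (Nat.dvd_of_mem_primeFactors hp))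
  · exact Nat.nonempty_primeFactors.mpr hn


lemma aux_prod_form {M : Type*} [CommMonoid M] (S : Finset ℕ) {k : ℕ} (hk : S.card = k)
    (f : ℕ → M) : ∏ p ∈ S, f p = ∏ i : Fin k, f (S.orderIsoOfFin hk i) := by
  rw [← Finset.prod_coe_sort S f]
  exact (Equiv.prod_comp (S.orderIsoOfFin hk).toEquiv (fun x : S => f (x : ℕ))).symm

lemma aux_nth_le (S : Finset ℕ) (hS : ∀ p ∈ S, p.Prime) {k : ℕ} (hk : S.card = k) (i : Fin k) :
    Nat.nth Nat.Prime i ≤ (S.orderIsoOfFin hk i : ℕ) := by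
  set e := S.orderIsoOfFin hk with he
  set a : ℕ := (e i : ℕ) with ha
  have hpa : Nat.Prime a := hS _ (e i).2
  have hcount : (i : ℕ) ≤ Nat.count Nat.Prime a := by
    rw [Nat.count_eq_card_filter_range]
    have hcard := Finset.card_le_card_of_injOn
      (fun j => if hj : j < k then (e ⟨j, hj⟩ : ℕ) else 0)
      (s := Finset.range (i : ℕ)) (t := Finset.filter Nat.Prime (Finset.range a)) ?_ ?_
    · simpa using hcard
    · intro j hj
      simp only [Finset.coe_range, Set.mem_Iio, Finset.mem_range] at hj
      have hjk : j < k := hj.trans i.2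
      simp only [dif_pos hjk, Finset.mem_coe]
      refine Finset.mem_filter.mpr ⟨Finset.mem_range.mpr ?_, hS _ (e ⟨j, hjk⟩).2⟩
      exact Subtype.coe_lt_coe.mpr (e.strictMono (show (⟨j, hjk⟩ : Fin k) < i from hj))
    · intro j1 h1 j2 h2 hee
      simp only [Finset.coe_range, Set.mem_Iio] at h1 h2
      have hk1 : j1 < k := h1.trans i.2
      have hk2 : j2 < k := h2.trans i.2
      simp only [dif_pos hk1, dif_pos hk2] at hee
      have := e.injective (Subtype.coe_injective hee)
      simpa using this
  calc Nat.nth Nat.Prime i ≤ Nat.nth Nat.Prime (Nat.count Nat.Prime a) :=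
        (Nat.nth_le_nth Nat.infinite_setOf_prime).mpr hcount
    _ = a := Nat.nth_count hpa

lemma aux_ratio (m : ℕ) (hm : m ≠ 0) :
    (m : ℝ) / (Nat.totient m : ℝ) = ∏ p ∈ m.primeFactors, (1 - (p : ℝ)⁻¹)⁻¹ := by
  have hq := Nat.totient_eq_mul_prod_factors m
  have hr : (Nat.totient m : ℝ) = (m : ℝ) * ∏ p ∈ m.primeFactors, (1 - (p : ℝ)⁻¹) := by
    have := congrArg (fun q : ℚ => (q : ℝ)) hq
    push_cast at this ⊢
    exact this
  have hm' : (0 : ℝ) < m := by positivity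
  rw [hr, div_mul_cancel_left₀ (by positivity : (m : ℝ) ≠ 0), ← Finset.prod_inv_distrib]

lemma aux_factor_pos {p : ℕ} (hp : 2 ≤ p) : (0 : ℝ) < 1 - (p : ℝ)⁻¹ := by
  have h2 : (2 : ℝ) ≤ p := by exact_mod_cast hp
  have : (p : ℝ)⁻¹ ≤ 2⁻¹ := by
    apply inv_anti₀ <;> norm_num [h2]
  linarith

lemma primeFactors_Nk (k : ℕ) :
    (Nk k).primeFactors = (Finset.range k).image (Nat.nth Nat.Prime) := by
  have hinj : Set.InjOn (Nat.nth Nat.Prime) (Finset.range k) :=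
    (Nat.nth_injective Nat.infinite_setOf_prime).injOn
  have hprod : (∏ p ∈ (Finset.range k).image (Nat.nth Nat.Prime), p) = Nk k := by
    rw [Finset.prod_image (fun a ha b hb h => hinj ha hb h), Nk]
  rw [← hprod]
  exact Nat.primeFactors_prod (fun p hp => by
    obtain ⟨i, _, rfl⟩ := Finset.mem_image.mp hp
    exact Nat.prime_nth_prime i)

theorem robin_of_primorial_condition (n : ℕ) (hn : 2 ≤ n)
    (h : (Nk n.primeFactors.card : ℝ) / (Nat.totient (Nk n.primeFactors.card) : ℝ) ≤
      Real.exp Real.eulerMascheroniConstant * Real.log (Real.log (Nk n.primeFactors.card))) :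
    (ArithmeticFunction.sigma 1 n : ℝ) / n <
      Real.exp Real.eulerMascheroniConstant * Real.log (Real.log n) := by
  set S := n.primeFactors with hSdef
  set k := S.card with hkdef
  have hn0 : n ≠ 0 := by omega
  have hS : ∀ p ∈ S, p.Prime := fun p hp => Nat.prime_of_mem_primeFactors hp
  have hkS : S.card = k := rfl
  set e := S.orderIsoOfFin hkS with he
  have hSne : S.Nonempty := Nat.nonempty_primeFactors.mpr (by omega)
  have hk1 : 1 ≤ k := Finset.card_pos.mpr hSne
  have hNk0 : Nk k ≠ 0 := by
    rw [Nk]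
    exact Finset.prod_ne_zero_iff.mpr fun i _ => (Nat.prime_nth_prime i).pos.ne'
  have hNk2 : 2 ≤ Nk k := by
    have h0 : (0 : ℕ) ∈ Finset.range k := Finset.mem_range.mpr hk1
    calc 2 = Nat.nth Nat.Prime 0 := Nat.nth_prime_zero_eq_two.symm
      _ ≤ ∏ i ∈ Finset.range k, Nat.nth Nat.Prime i :=
          Finset.single_le_prod' (fun i _ => (Nat.prime_nth_prime i).one_lt.le) h0
      _ = Nk k := rfl
  have hNk_le : Nk k ≤ n := by
    have h1 : Nk k ≤ ∏ p ∈ S, p := by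
      rw [aux_prod_form S hkS (fun p => p), Nk, ← Fin.prod_univ_eq_prod_range]
      exact Finset.prod_le_prod (fun i _ => Nat.zero_le _) (fun i _ => aux_nth_le S hS hkS i)
    exact h1.trans (Nat.le_of_dvd (by omega) (Nat.prod_primeFactors_dvd n))
  have hφpos : (0 : ℝ) < Nat.totient n := by
    exact_mod_cast Nat.totient_pos.mpr (by omega : 0 < n)
  have hnpos : (0 : ℝ) < n := by exact_mod_cast (by omega : 0 < n)
  have key1 : (ArithmeticFunction.sigma 1 n : ℝ) / n < (n : ℝ) / Nat.totient n := by
    rw [div_lt_div_iff₀ hnpos hφpos]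
    exact_mod_cast aux_sigma_phi_lt n hn
  have key2 : (n : ℝ) / Nat.totient n ≤ (Nk k : ℝ) / Nat.totient (Nk k) := by
    rw [aux_ratio n hn0, aux_ratio (Nk k) hNk0, primeFactors_Nk k,
      Finset.prod_image (fun a _ b _ hab =>
        Nat.nth_injective Nat.infinite_setOf_prime hab)]
    rw [show n.primeFactors = S from rfl,
      aux_prod_form S hkS (fun p => (1 - (p : ℝ)⁻¹)⁻¹), ← Fin.prod_univ_eq_prod_range]
    apply Finset.prod_le_prod
    · intro i _
      exact (inv_pos.mpr (aux_factor_pos (hS _ (e i).2).two_le)).le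
    · intro i _
      have h1 : 2 ≤ Nat.nth Nat.Prime i := (Nat.prime_nth_prime i).two_le
      have h2 : ((Nat.nth Nat.Prime i : ℕ) : ℝ) ≤ ((e i : ℕ) : ℝ) := by
        exact_mod_cast aux_nth_le S hS hkS i
      have hx : (0 : ℝ) < 1 - (Nat.nth Nat.Prime i : ℝ)⁻¹ := aux_factor_pos h1
      have hpos : (0 : ℝ) < Nat.nth Nat.Prime i := by
        exact_mod_cast (Nat.prime_nth_prime i).pos
      have hy : 1 - (Nat.nth Nat.Prime i : ℝ)⁻¹ ≤ 1 - ((e i : ℕ) : ℝ)⁻¹ := by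
        have : ((e i : ℕ) : ℝ)⁻¹ ≤ (Nat.nth Nat.Prime i : ℝ)⁻¹ := inv_anti₀ hpos h2
        linarith
      exact inv_anti₀ hx hy
  have hlogNk : 0 < Real.log (Nk k) :=
    Real.log_pos (by exact_mod_cast (by omega : 1 < Nk k))
  have key4 : Real.log (Real.log (Nk k)) ≤ Real.log (Real.log n) :=
    Real.log_le_log hlogNk
      (Real.log_le_log (by exact_mod_cast (by omega : 0 < Nk k)) (by exact_mod_cast hNk_le))
  calc (ArithmeticFunction.sigma 1 n : ℝ) / n
      < (n : ℝ) / Nat.totient n := key1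
    _ ≤ (Nk k : ℝ) / Nat.totient (Nk k) := key2
    _ ≤ Real.exp Real.eulerMascheroniConstant * Real.log (Real.log (Nk k)) := h
    _ ≤ Real.exp Real.eulerMascheroniConstant * Real.log (Real.log n) :=
        mul_le_mul_of_nonneg_left key4 (Real.exp_pos _).le
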